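/- For integers i, j ≥ 1, define g_{ij} as follows: set n = 7i − j; if n < 0 put g_{ij} = +∞; if n ≥ 0 and n ≡ 1 or 3 (mod 5) put g_{ij} = n/12 − (⌊n/5⌋ − 1)/4; if n ≥ 0 and n ≡ 0, 2, or 4 (mod 5) put g_{ij} = n/12 − ⌊n/5⌋/4. Then for all i, j ≥ 1 one has g_{ij} ≥ (7i − j)/30, and consequently the quantity D_{ij} := g_{ij} − (5/12 + (i−j)/12) satisfies D_{ij} > 1/2 whenever max(i, j) > 12. Moreover D_{ij} ≥ 1/12 for all i, j ≥ 1 except D_{1,2} = −1/6. -/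

import Mathlib

/-!
STATEMENT 7: For `i, j ≥ 1` put `n = 7i − j` and define `g_{ij} ∈ ℝ ∪ {+∞}` by:
`g_{ij} = +∞` if `n < 0`; `g_{ij} = n/12 − (⌊n/5⌋ − 1)/4` if `n ≥ 0`, `n ≡ 1, 3 (mod 5)`;
`g_{ij} = n/12 − ⌊n/5⌋/4` if `n ≥ 0`, `n ≡ 0, 2, 4 (mod 5)`.  Then
`g_{ij} ≥ (7i − j)/30`; consequently `D_{ij} := g_{ij} − (5/12 + (i−j)/12)` satisfies
`D_{ij} > 1/2` whenever `max(i,j) > 12`; and `D_{ij} ≥ 1/12` for all `i, j ≥ 1` except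
`D_{1,2} = −1/6`.
-/

/-- The lower bound `g_{ij}` for `ord_7 G_{7i−j}` for the polynomial `x⁵ + c·x²`. -/
noncomputable def g7 (i j : ℕ) : WithTop ℝ :=
  let n : ℤ := 7 * i - j
  if n < 0 then ⊤
  else if n % 5 = 1 ∨ n % 5 = 3 then
    (((n : ℝ) / 12 - (((n / 5 : ℤ) : ℝ) - 1) / 4 : ℝ) : WithTop ℝ)
  else (((n : ℝ) / 12 - ((n / 5 : ℤ) : ℝ) / 4 : ℝ) : WithTop ℝ)

/-- The defect matrix `D_{ij} = g_{ij} − (5/12 + (i−j)/12)` (subtraction of a real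
constant written as addition of its negative, so `⊤` entries stay `⊤`). -/
noncomputable def D7 (i j : ℕ) : WithTop ℝ :=
  g7 i j + ((-(5 / 12 + ((i : ℝ) - (j : ℝ)) / 12) : ℝ) : WithTop ℝ)

lemma g7_ge_aux (i j : ℕ) :
    ((((7 * i - j : ℤ) : ℝ) / 30 : ℝ) : WithTop ℝ) ≤ g7 i j := by
  unfold g7
  dsimp only
  set n : ℤ := 7 * i - j with hn
  have key : ((n / 5 : ℤ) : ℝ) * 5 ≤ (n : ℝ) := by
    have h1 := Int.mul_ediv_add_emod n 5
    have h2 := Int.emod_nonneg n (by norm_num : (5:ℤ) ≠ 0)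
    have : (n / 5 : ℤ) * 5 ≤ n := by omega
    exact_mod_cast this
  split_ifs with h1 h2
  · exact le_top
  · exact WithTop.coe_le_coe.mpr (by linarith)
  · exact WithTop.coe_le_coe.mpr (by linarith)

lemma D7_ge_aux (i j : ℕ) :
    ((((7 * i - j : ℤ) : ℝ) / 30 + -(5 / 12 + ((i : ℝ) - (j : ℝ)) / 12) : ℝ) : WithTop ℝ)
      ≤ D7 i j := by
  unfold D7
  rw [WithTop.coe_add]
  exact add_le_add_left (g7_ge_aux i j) _

theorem g7_bounds :
    (∀ i j : ℕ, 1 ≤ i → 1 ≤ j →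
      ((((7 * i - j : ℤ) : ℝ) / 30 : ℝ) : WithTop ℝ) ≤ g7 i j) ∧
    (∀ i j : ℕ, 1 ≤ i → 1 ≤ j → 12 < max i j →
      (((1 / 2 : ℝ)) : WithTop ℝ) < D7 i j) ∧
    (∀ i j : ℕ, 1 ≤ i → 1 ≤ j → ¬(i = 1 ∧ j = 2) →
      (((1 / 12 : ℝ)) : WithTop ℝ) ≤ D7 i j) ∧
    D7 1 2 = (((-(1 / 6) : ℝ)) : WithTop ℝ) := by
  refine ⟨fun i j _ _ => g7_ge_aux i j, ?_, ?_, ?_⟩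
  · intro i j hi hj hmax
    rw [lt_sup_iff] at hmax
    by_cases h : i = 1 ∧ 13 ≤ j
    · obtain ⟨hi1, hj13⟩ := h
      subst hi1
      have hg : g7 1 j = ⊤ := by
        unfold g7
        rw [if_pos]
        push_cast
        omega
      have : D7 1 j = ⊤ := by
        unfold D7
        rw [hg, top_add]
      rw [this]
      exact WithTop.coe_lt_top _
    · have h19 : 19 ≤ 3 * i + j := by omega
      refine lt_of_lt_of_le ?_ (D7_ge_aux i j)
      apply WithTop.coe_lt_coe.mpr
      have h19' : (19 : ℝ) ≤ 3 * i + j := by exact_mod_cast h19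
      push_cast
      linarith
  · intro i j hi hj hne
    by_cases h10 : 10 ≤ 3 * i + j
    · refine le_trans ?_ (D7_ge_aux i j)
      apply WithTop.coe_le_coe.mpr
      have h10' : (10 : ℝ) ≤ 3 * i + j := by exact_mod_cast h10
      push_cast
      linarith
    · have hi2 : i ≤ 2 := by omega
      have hj6 : j ≤ 6 := by omega
      interval_cases i <;> interval_cases j <;>
        first
          | omega
          | norm_num [D7, g7, ← WithTop.LinearOrderedAddCommGroup.coe_neg, ← WithTop.coe_add]
  · norm_num [D7, g7, ← WithTop.LinearOrderedAddCommGroup.coe_neg, ← WithTop.coe_add]
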